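/- Let F be a J-frame for a Krein space H with J-frame operator S, and let S^{1/2} be the invertible J-selfadjoint square root of S (obtained by the Riesz–Dunford functional calculus along a contour in the right half-plane). Then L₊ := S^{1/2}(M₋^{[⊥]}) is a maximal uniformly J-positive subspace, L₋ := S^{1/2}(M₊^{[⊥]}) is a maximal uniformly J-negative subspace, and H = L₊ [∔] L₋ is a fundamental decomposition (in particular L₊ [⊥] L₋). -/

import Mathlib

noncomputable section

open scoped Classical

open Function

/-- The indefinite inner ℂ product `[x,y] = ⟨Jx, y⟩` induced by an operator `J`. -/
def kre {E : Type*} [NormedAddCommGroup E] [InnerProductSpace ℂ E]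
    (J : E →L[ℂ] E) (x y : E) : ℂ := @inner ℂ _ _ (J x) y

/-- `J` is a fundamental symmetry: a selfadjoint unitary (involutive) operator. -/
def IsFundSym {E : Type*} [NormedAddCommGroup E] [InnerProductSpace ℂ E] [CompleteSpace E]
    (J : E →L[ℂ] E) : Prop :=
  IsSelfAdjoint J ∧ J.comp J = ContinuousLinearMap.id ℂ E

/-- The J-orthogonal companion of a subspace. -/
def JorthCompanion {E : Type*} [NormedAddCommGroup E] [InnerProductSpace ℂ E]
    (J : E →L[ℂ] E) (S : Submodule ℂ E) : Submodule ℂ E where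
  carrier := {x | ∀ s ∈ S, kre J x s = 0}
  zero_mem' := by intro s hs; simp [kre]
  add_mem' := by
    intro a b ha hb s hs
    have h1 := ha s hs
    have h2 := hb s hs
    simp only [kre, map_add, inner_add_left] at h1 h2 ⊢
    rw [h1, h2, add_zero]
  smul_mem' := by
    intro c x hx s hs
    have h1 := hx s hs
    simp only [kre, map_smul, inner_smul_left] at h1 ⊢
    rw [h1, mul_zero]

/-- Uniformly J-positive subspace. -/
def UnifJPos {E : Type*} [NormedAddCommGroup E] [InnerProductSpace ℂ E]
    (J : E →L[ℂ] E) (S : Submodule ℂ E) : Prop :=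
  ∃ α : ℝ, 0 < α ∧ ∀ x ∈ S, α * ‖x‖ ^ 2 ≤ (kre J x x).re

/-- Uniformly J-negative subspace. -/
def UnifJNeg {E : Type*} [NormedAddCommGroup E] [InnerProductSpace ℂ E]
    (J : E →L[ℂ] E) (S : Submodule ℂ E) : Prop :=
  ∃ α : ℝ, 0 < α ∧ ∀ x ∈ S, (kre J x x).re ≤ -(α * ‖x‖ ^ 2)

/-- Maximal uniformly J-positive subspace. -/
def MaxUnifJPos {E : Type*} [NormedAddCommGroup E] [InnerProductSpace ℂ E]
    (J : E →L[ℂ] E) (S : Submodule ℂ E) : Prop :=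
  UnifJPos J S ∧ ∀ S' : Submodule ℂ E, UnifJPos J S' → S ≤ S' → S' = S

/-- Maximal uniformly J-negative subspace. -/
def MaxUnifJNeg {E : Type*} [NormedAddCommGroup E] [InnerProductSpace ℂ E]
    (J : E →L[ℂ] E) (S : Submodule ℂ E) : Prop :=
  UnifJNeg J S ∧ ∀ S' : Submodule ℂ E, UnifJNeg J S' → S ≤ S' → S' = S

/-- J-selfadjoint operator (with respect to the indefinite inner ℂ product of `J`). -/
def IsJSelfAdj {E : Type*} [NormedAddCommGroup E] [InnerProductSpace ℂ E]
    (J : E →L[ℂ] E) (A : E →L[ℂ] E) : Prop :=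
  ∀ x y : E, kre J (A x) y = kre J x (A y)

/-- The J-order: `A ≤_J B` iff `B - A` is J-positive. -/
def JLe {E : Type*} [NormedAddCommGroup E] [InnerProductSpace ℂ E]
    (J : E →L[ℂ] E) (A B : E →L[ℂ] E) : Prop :=
  ∀ x : E, 0 ≤ (kre J (B x - A x) x).re ∧ (kre J (B x - A x) x).im = 0

/-- The subspace of `ℓ²(I)` supported on a subset (given by a predicate) of `I`. -/
def suppSub {I : Type*} (A : I → Prop) : Submodule ℂ (lp (fun _ : I => ℂ) 2) where
  carrier := {x | ∀ i, ¬ A i → x i = 0}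
  zero_mem' := by intro i _; rfl
  add_mem' := by
    intro a b ha hb i hi
    have : (↑(a + b) : ∀ i, ℂ) i = a i + b i := by
      rw [lp.coeFn_add]; rfl
    simp [this, ha i hi, hb i hi]
  smul_mem' := by
    intro c x hx i hi
    have : (↑(c • x) : ∀ i, ℂ) i = c • x i := by
      rw [lp.coeFn_smul]; rfl
    simp [this, hx i hi]

variable {H : Type*} [NormedAddCommGroup H] [InnerProductSpace ℂ H] [CompleteSpace H]
variable {I : Type*} [DecidableEq I]

/-- `i` is a "positive index" for the family `f` w.r.t. `J`: `[f i, f i] ≥ 0`. -/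
def posIdx {H : Type*} [NormedAddCommGroup H] [InnerProductSpace ℂ H]
    (J : H →L[ℂ] H) (f : I → H) (i : I) : Prop := 0 ≤ (kre J (f i) (f i)).re

/-- The sign `σ_i = sgn [f i, f i]` (as a complex scalar, `+1` on `I₊` and `-1` on `I₋`). -/
def sgnv {H : Type*} [NormedAddCommGroup H] [InnerProductSpace ℂ H]
    (J : H →L[ℂ] H) (f : I → H) (i : I) : ℂ := if posIdx J f i then 1 else -1

/-- Closure of the span of the vectors of the family `h` with positive indices (signs taken
from the family `f`). -/
def posSpan {H : Type*} [NormedAddCommGroup H] [InnerProductSpace ℂ H]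
    (J : H →L[ℂ] H) (f h : I → H) : Submodule ℂ H :=
  (Submodule.span ℂ {x | ∃ i, posIdx J f i ∧ h i = x}).topologicalClosure

/-- Closure of the span of the vectors of the family `h` with negative indices. -/
def negSpan {H : Type*} [NormedAddCommGroup H] [InnerProductSpace ℂ H]
    (J : H →L[ℂ] H) (f h : I → H) : Submodule ℂ H :=
  (Submodule.span ℂ {x | ∃ i, ¬ posIdx J f i ∧ h i = x}).topologicalClosure

/-- A Bessel family in a Hilbert space. -/
def IsBessel {H : Type*} [NormedAddCommGroup H] [InnerProductSpace ℂ H]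
    (g : I → H) : Prop :=
  ∃ β : ℝ, ∀ (x : H) (s : Finset I),
    ∑ i ∈ s, ‖@inner ℂ _ _ (g i) x‖ ^ 2 ≤ β * ‖x‖ ^ 2

/-- `g` is a dual family for `f`: the signs coincide and the two indefinite
reconstruction formulas hold. -/
def IsDualFamily {H : Type*} [NormedAddCommGroup H] [InnerProductSpace ℂ H]
    (J : H →L[ℂ] H) (f g : I → H) : Prop :=
  (∀ i, Real.sign ((kre J (g i) (g i)).re) = Real.sign ((kre J (f i) (f i)).re)) ∧
  (∀ x : H, HasSum (fun i => (sgnv J f i * kre J x (f i)) • g i) x) ∧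
  (∀ x : H, HasSum (fun i => (sgnv J f i * kre J x (g i)) • f i) x)



/-- Membership in the J-orthogonal companion, definitionally. -/
lemma mem_JorthCompanion {E : Type*} [NormedAddCommGroup E] [InnerProductSpace ℂ E]
    (J : E →L[ℂ] E) (S : Submodule ℂ E) (x : E) :
    x ∈ JorthCompanion J S ↔ ∀ s ∈ S, kre J x s = 0 := Iff.rfl

set_option maxHeartbeats 1600000 in
/-- `L₊ = S^(1/2)(M₋^[⊥])` is maximal uniformly J-positive,
`L₋ = S^(1/2)(M₊^[⊥])` is maximal uniformly J-negative, and `H = L₊ [∔] L₋` is a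
fundamental decomposition. -/
theorem sqrt_fundamental_decomposition
    (J : H →L[ℂ] H) (hJ : IsFundSym J) (f : I → H)
    (T : lp (fun _ : I => ℂ) 2 →L[ℂ] H)
    (hT : ∀ i, T (lp.single 2 i (1:ℂ)) = f i)
    (hTsurj : Function.Surjective T)
    (Pp Pm : lp (fun _ : I => ℂ) 2 →L[ℂ] lp (fun _ : I => ℂ) 2)
    (hPp : ∀ (x : lp (fun _ : I => ℂ) 2) (i : I), Pp x i = if posIdx J f i then x i else 0)
    (hPm : ∀ (x : lp (fun _ : I => ℂ) 2) (i : I), Pm x i = if posIdx J f i then 0 else x i)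
    (hJF : MaxUnifJPos J (LinearMap.range (T.comp Pp : lp (fun _ : I => ℂ) 2 →ₗ[ℂ] H)) ∧
      MaxUnifJNeg J (LinearMap.range (T.comp Pm : lp (fun _ : I => ℂ) 2 →ₗ[ℂ] H)))
    (Tp : H →L[ℂ] lp (fun _ : I => ℂ) 2)
    (hTp : ∀ (x : lp (fun _ : I => ℂ) 2) (y : H), kre J (T x) y = kre (Pp - Pm) x (Tp y))
    (R : H →L[ℂ] H) (hRsq : R.comp R = T.comp Tp) (hRsa : IsJSelfAdj J R)
    (Rinv : H →L[ℂ] H)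
    (hR1 : R.comp Rinv = ContinuousLinearMap.id ℂ H)
    (hR2 : Rinv.comp R = ContinuousLinearMap.id ℂ H)
    (hRspec : ∀ z ∈ spectrum ℂ R, |z.im| < z.re) :
    MaxUnifJPos J (Submodule.map (R : H →ₗ[ℂ] H) (JorthCompanion J (LinearMap.range (T.comp Pm : lp (fun _ : I => ℂ) 2 →ₗ[ℂ] H)))) ∧
      MaxUnifJNeg J (Submodule.map (R : H →ₗ[ℂ] H) (JorthCompanion J (LinearMap.range (T.comp Pp : lp (fun _ : I => ℂ) 2 →ₗ[ℂ] H)))) ∧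
      (∀ x ∈ Submodule.map (R : H →ₗ[ℂ] H) (JorthCompanion J (LinearMap.range (T.comp Pm : lp (fun _ : I => ℂ) 2 →ₗ[ℂ] H))),
        ∀ y ∈ Submodule.map (R : H →ₗ[ℂ] H) (JorthCompanion J (LinearMap.range (T.comp Pp : lp (fun _ : I => ℂ) 2 →ₗ[ℂ] H))),
          kre J x y = 0) ∧
      Submodule.map (R : H →ₗ[ℂ] H) (JorthCompanion J (LinearMap.range (T.comp Pm : lp (fun _ : I => ℂ) 2 →ₗ[ℂ] H))) ⊓
          Submodule.map (R : H →ₗ[ℂ] H) (JorthCompanion J (LinearMap.range (T.comp Pp : lp (fun _ : I => ℂ) 2 →ₗ[ℂ] H))) = ⊥ ∧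
      Submodule.map (R : H →ₗ[ℂ] H) (JorthCompanion J (LinearMap.range (T.comp Pm : lp (fun _ : I => ℂ) 2 →ₗ[ℂ] H))) ⊔
          Submodule.map (R : H →ₗ[ℂ] H) (JorthCompanion J (LinearMap.range (T.comp Pp : lp (fun _ : I => ℂ) 2 →ₗ[ℂ] H))) = ⊤ := by
  classical
  obtain ⟨hJsa, hJ2⟩ := hJ
  have hJsym : ∀ x y : H, (inner ℂ (J x) y : ℂ) = inner ℂ x (J y) := fun x y => hJsa.isSymmetric x y
  have hJJ : ∀ x : H, J (J x) = x := fun x => by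
    have := ContinuousLinearMap.ext_iff.mp hJ2 x
    simpa using this
  have hkresymm : ∀ x y : H, kre J x y = starRingEnd ℂ (kre J y x) := by
    intro x y
    simp only [kre]
    rw [inner_conj_symm, hJsym]
  -- pointwise projection algebra
  have hPp2 : ∀ x : lp (fun _ : I => ℂ) 2, Pp (Pp x) = Pp x := by
    intro x; apply lp.ext; funext i
    by_cases h : posIdx J f i <;> simp [hPp, h]
  have hPm2 : ∀ x : lp (fun _ : I => ℂ) 2, Pm (Pm x) = Pm x := by
    intro x; apply lp.ext; funext i
    by_cases h : posIdx J f i <;> simp [hPm, h]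
  have hPmPp : ∀ x : lp (fun _ : I => ℂ) 2, Pm (Pp x) = 0 := by
    intro x; apply lp.ext; funext i
    by_cases h : posIdx J f i <;> simp [hPp, hPm, h]
  have hPpPm : ∀ x : lp (fun _ : I => ℂ) 2, Pp (Pm x) = 0 := by
    intro x; apply lp.ext; funext i
    by_cases h : posIdx J f i <;> simp [hPp, hPm, h]
  have hsum : ∀ x : lp (fun _ : I => ℂ) 2, Pp x + Pm x = x := by
    intro x; apply lp.ext; funext i
    have : (↑(Pp x + Pm x) : ∀ i, ℂ) i = Pp x i + Pm x i := by rw [lp.coeFn_add]; rfl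
    rw [this]
    by_cases h : posIdx J f i <;> simp [hPp, hPm, h]
  -- disjoint supports give orthogonality in ℓ²
  have hdisjPM : ∀ a b : lp (fun _ : I => ℂ) 2, (inner ℂ (Pp a) (Pm b) : ℂ) = 0 := by
    intro a b
    rw [lp.inner_eq_tsum]
    have h : ∀ i, (inner ℂ ((Pp a) i) ((Pm b) i) : ℂ) = 0 := by
      intro i; by_cases h : posIdx J f i
      · rw [hPm b i, if_pos h, inner_zero_right]
      · rw [hPp a i, if_neg h, inner_zero_left]
    rw [tsum_congr h, tsum_zero]
  have hdisjMP : ∀ a b : lp (fun _ : I => ℂ) 2, (inner ℂ (Pm a) (Pp b) : ℂ) = 0 := by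
    intro a b
    rw [lp.inner_eq_tsum]
    have h : ∀ i, (inner ℂ ((Pm a) i) ((Pp b) i) : ℂ) = 0 := by
      intro i; by_cases h : posIdx J f i
      · rw [hPm a i, if_pos h, inner_zero_left]
      · rw [hPp b i, if_neg h, inner_zero_right]
    rw [tsum_congr h, tsum_zero]
  -- operator-level identities
  have hPpm1 : ∀ u : lp (fun _ : I => ℂ) 2, (Pp - Pm) (Pp u) = Pp u := by
    intro u; rw [ContinuousLinearMap.sub_apply, hPmPp, sub_zero, hPp2]
  have hPpm2 : ∀ u : lp (fun _ : I => ℂ) 2, (Pp - Pm) (Pm u) = -(Pm u) := by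
    intro u; rw [ContinuousLinearMap.sub_apply, hPpPm, hPm2, zero_sub]
  have hPpm3 : ∀ u : lp (fun _ : I => ℂ) 2, (Pp - Pm) ((Pp - Pm) u) = u := by
    intro u
    simp only [ContinuousLinearMap.sub_apply, map_sub, hPmPp, hPpPm, hPp2, hPm2,
      sub_zero, zero_sub, sub_neg_eq_add, hsum]
  -- the key identity from hTp
  have hkey : ∀ (u : lp (fun _ : I => ℂ) 2) (y : H),
      kre J (T u) y = (inner ℂ ((Pp - Pm) u) (Tp y) : ℂ) := fun u y => hTp u y
  -- vanishing criterion
  have hzero : ∀ w : H, (∀ y : H, kre J w y = 0) → w = 0 := by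
    intro w hw
    have h1 := hw (J w)
    simp only [kre] at h1
    have h2 : J w = 0 := inner_self_eq_zero.mp h1
    rw [← hJJ w, h2, map_zero]
  -- M₊ ∩ M₋ = 0, in the form we need
  have hTPpKer : ∀ u : lp (fun _ : I => ℂ) 2, T (Pp u) = T (Pm u) → T (Pp u) = 0 := by
    intro u h
    obtain ⟨α, hα, hPos⟩ := hJF.1.1
    obtain ⟨β, hβ, hNeg⟩ := hJF.2.1
    have h1 := hPos (T (Pp u)) ⟨u, rfl⟩
    have h2 := hNeg (T (Pp u)) ⟨u, h.symm⟩
    have hn : ‖T (Pp u)‖ ^ 2 = 0 := by nlinarith [sq_nonneg ‖T (Pp u)‖]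
    exact norm_eq_zero.mp (sq_eq_zero_iff.mp hn)
  -- characterizations of the J-orthogonal companions
  have memMm : ∀ x : H,
      x ∈ JorthCompanion J (LinearMap.range (T.comp Pm : lp (fun _ : I => ℂ) 2 →ₗ[ℂ] H)) ↔ Pm (Tp x) = 0 := by
    intro x
    constructor
    · intro hx
      have h1 : kre J x (T (Pm (Tp x))) = 0 := hx _ ⟨Tp x, rfl⟩
      rw [hkresymm] at h1
      have h2 : kre J (T (Pm (Tp x))) x = 0 := by
        have := congrArg (starRingEnd ℂ) h1
        simpa using this
      rw [hkey, hPpm2, inner_neg_left, neg_eq_zero] at h2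
      have h3 : (inner ℂ (Pm (Tp x)) (Pm (Tp x)) : ℂ) = inner ℂ (Pm (Tp x)) (Tp x) := by
        calc (inner ℂ (Pm (Tp x)) (Pm (Tp x)) : ℂ)
            = inner ℂ (Pm (Tp x)) (Pp (Tp x)) + inner ℂ (Pm (Tp x)) (Pm (Tp x)) := by
              rw [hdisjMP, zero_add]
          _ = inner ℂ (Pm (Tp x)) (Pp (Tp x) + Pm (Tp x)) := (inner_add_right _ _ _).symm
          _ = inner ℂ (Pm (Tp x)) (Tp x) := by rw [hsum]
      exact inner_self_eq_zero.mp (h3.trans h2)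
    · intro h0 s hs
      obtain ⟨c, rfl⟩ := hs
      change kre J x (T (Pm c)) = 0
      rw [hkresymm]
      have h1 : kre J (T (Pm c)) x = 0 := by
        rw [hkey, hPpm2, inner_neg_left, neg_eq_zero, ← hsum (Tp x)]
        rw [inner_add_right, hdisjMP, zero_add, h0, inner_zero_right]
      rw [h1, map_zero]
  have memMp : ∀ x : H,
      x ∈ JorthCompanion J (LinearMap.range (T.comp Pp : lp (fun _ : I => ℂ) 2 →ₗ[ℂ] H)) ↔ Pp (Tp x) = 0 := by
    intro x
    constructor
    · intro hx
      have h1 : kre J x (T (Pp (Tp x))) = 0 := hx _ ⟨Tp x, rfl⟩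
      rw [hkresymm] at h1
      have h2 : kre J (T (Pp (Tp x))) x = 0 := by
        have := congrArg (starRingEnd ℂ) h1
        simpa using this
      rw [hkey, hPpm1] at h2
      have h3 : (inner ℂ (Pp (Tp x)) (Pp (Tp x)) : ℂ) = inner ℂ (Pp (Tp x)) (Tp x) := by
        calc (inner ℂ (Pp (Tp x)) (Pp (Tp x)) : ℂ)
            = inner ℂ (Pp (Tp x)) (Pp (Tp x)) + inner ℂ (Pp (Tp x)) (Pm (Tp x)) := by
              rw [hdisjPM, add_zero]
          _ = inner ℂ (Pp (Tp x)) (Pp (Tp x) + Pm (Tp x)) := (inner_add_right _ _ _).symm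
          _ = inner ℂ (Pp (Tp x)) (Tp x) := by rw [hsum]
      exact inner_self_eq_zero.mp (h3.trans h2)
    · intro h0 s hs
      obtain ⟨c, rfl⟩ := hs
      change kre J x (T (Pp c)) = 0
      rw [hkresymm]
      have h1 : kre J (T (Pp c)) x = 0 := by
        rw [hkey, hPpm1, ← hsum (Tp x)]
        rw [inner_add_right, hdisjPM, add_zero, h0, inner_zero_right]
      rw [h1, map_zero]
  -- R ∘ R = T ∘ Tp pointwise
  have hRR : ∀ x : H, R (R x) = T (Tp x) := fun x => by
    have := ContinuousLinearMap.ext_iff.mp hRsq x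
    simpa using this
  have hRinvR : ∀ z : H, Rinv (R z) = z := fun z => by
    have := ContinuousLinearMap.ext_iff.mp hR2 z
    simpa using this
  have hRRinv : ∀ z : H, R (Rinv z) = z := fun z => by
    have := ContinuousLinearMap.ext_iff.mp hR1 z
    simpa using this
  -- the value of the indefinite form on R x
  have hval : ∀ x : H,
      kre J (R x) (R x) = starRingEnd ℂ (inner ℂ ((Pp - Pm) (Tp x)) (Tp x) : ℂ) := by
    intro x
    rw [hRsa x (R x), hRR x, hkresymm, hkey]
  have hvalPos : ∀ x : H, Pm (Tp x) = 0 → (kre J (R x) (R x)).re = ‖Tp x‖ ^ 2 := by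
    intro x h0
    have h1 : (Pp - Pm) (Tp x) = Tp x := by
      have h2 := hsum (Tp x)
      rw [h0, add_zero] at h2
      rw [ContinuousLinearMap.sub_apply, h0, sub_zero, h2]
    rw [hval, h1, inner_conj_symm, inner_self_eq_norm_sq_to_K]
    norm_cast
  have hvalNeg : ∀ x : H, Pp (Tp x) = 0 → (kre J (R x) (R x)).re = -(‖Tp x‖ ^ 2) := by
    intro x h0
    have h1 : (Pp - Pm) (Tp x) = -(Tp x) := by
      have h2 := hsum (Tp x)
      rw [h0, zero_add] at h2
      rw [ContinuousLinearMap.sub_apply, h0, zero_sub, h2]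
    rw [hval, h1, inner_neg_left, map_neg, inner_conj_symm, inner_self_eq_norm_sq_to_K]
    rw [Complex.neg_re, neg_inj]
    norm_cast
  -- Tp is bounded below
  set cst : ℝ := ‖Rinv‖ ^ 2 * (‖T‖ + 1) + 1 with hcst
  have hcpos : 0 < cst := by positivity
  have hlow : ∀ x : H, ‖x‖ ≤ cst * ‖Tp x‖ := by
    intro x
    have e2 : x = Rinv (Rinv (T (Tp x))) := by
      calc x = Rinv (R x) := (hRinvR x).symm
        _ = Rinv (Rinv (R (R x))) := by rw [hRinvR (R x)]
        _ = Rinv (Rinv (T (Tp x))) := by rw [hRR]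
    have b1 := Rinv.le_opNorm (Rinv (T (Tp x)))
    rw [← e2] at b1
    have b2 := Rinv.le_opNorm (T (Tp x))
    have b3 := T.le_opNorm (Tp x)
    nlinarith [norm_nonneg Rinv, norm_nonneg (Tp x), norm_nonneg (T (Tp x)),
      norm_nonneg (Rinv (T (Tp x))), norm_nonneg x, sq_nonneg ‖Rinv‖,
      mul_le_mul_of_nonneg_left b2 (norm_nonneg Rinv),
      mul_le_mul_of_nonneg_left b3 (mul_self_nonneg ‖Rinv‖)]
  have hApos : (0:ℝ) < ((‖R‖ + 1) * cst) ^ 2 := by positivity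
  have hboundR : ∀ x : H, ‖R x‖ ^ 2 ≤ ((‖R‖ + 1) * cst) ^ 2 * ‖Tp x‖ ^ 2 := by
    intro x
    have b1 := R.le_opNorm x
    have b2 := hlow x
    nlinarith [norm_nonneg R, norm_nonneg x, norm_nonneg (Tp x), norm_nonneg (R x),
      mul_le_mul_of_nonneg_left b2 (norm_nonneg R), hcpos.le]
  -- uniform positivity / negativity
  have hLpPos : UnifJPos J
      (Submodule.map (R : H →ₗ[ℂ] H) (JorthCompanion J (LinearMap.range (T.comp Pm : lp (fun _ : I => ℂ) 2 →ₗ[ℂ] H)))) := by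
    refine ⟨(((‖R‖ + 1) * cst) ^ 2)⁻¹, by positivity, ?_⟩
    intro y hy
    obtain ⟨x, hx, rfl⟩ := Submodule.mem_map.mp hy
    rw [ContinuousLinearMap.coe_coe, hvalPos x ((memMm x).mp hx), inv_mul_le_iff₀ hApos]
    exact hboundR x
  have hLmNeg : UnifJNeg J
      (Submodule.map (R : H →ₗ[ℂ] H) (JorthCompanion J (LinearMap.range (T.comp Pp : lp (fun _ : I => ℂ) 2 →ₗ[ℂ] H)))) := by
    refine ⟨(((‖R‖ + 1) * cst) ^ 2)⁻¹, by positivity, ?_⟩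
    intro y hy
    obtain ⟨x, hx, rfl⟩ := Submodule.mem_map.mp hy
    rw [ContinuousLinearMap.coe_coe, hvalNeg x ((memMp x).mp hx), neg_le_neg_iff, inv_mul_le_iff₀ hApos]
    exact hboundR x
  -- J-orthogonality of L₊ and L₋
  have horth : ∀ x ∈ Submodule.map (R : H →ₗ[ℂ] H) (JorthCompanion J (LinearMap.range (T.comp Pm : lp (fun _ : I => ℂ) 2 →ₗ[ℂ] H))),
      ∀ y ∈ Submodule.map (R : H →ₗ[ℂ] H) (JorthCompanion J (LinearMap.range (T.comp Pp : lp (fun _ : I => ℂ) 2 →ₗ[ℂ] H))),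
      kre J x y = 0 := by
    intro x' hx' y' hy'
    obtain ⟨x, hx, rfl⟩ := Submodule.mem_map.mp hx'
    obtain ⟨y, hy, rfl⟩ := Submodule.mem_map.mp hy'
    have h0 : Pp (Tp y) = 0 := (memMp y).mp hy
    have h2 : Tp y = Pm (Tp y) := by
      have := hsum (Tp y); rw [h0, zero_add] at this; exact this.symm
    rw [ContinuousLinearMap.coe_coe, hRsa x (R y), hRR y, h2]
    exact hx _ ⟨Tp y, rfl⟩
  -- Pp (Tp x) always lies in the range of Tp
  have hanti : AntilipschitzWith cst.toNNReal Tp := by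
    apply Tp.antilipschitz_of_bound
    intro x
    rw [Real.coe_toNNReal cst hcpos.le]
    exact hlow x
  have hclosed : IsClosed ((LinearMap.range (Tp : H →ₗ[ℂ] lp (fun _ : I => ℂ) 2) : Submodule ℂ (lp (fun _ : I => ℂ) 2)) :
      Set (lp (fun _ : I => ℂ) 2)) := by
    rw [show ((LinearMap.range (Tp : H →ₗ[ℂ] lp (fun _ : I => ℂ) 2) : Submodule ℂ (lp (fun _ : I => ℂ) 2)) :
      Set (lp (fun _ : I => ℂ) 2)) = Set.range ⇑Tp from LinearMap.coe_range _]
    exact hanti.isClosed_range Tp.uniformContinuous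
  have hOO : ((LinearMap.range (Tp : H →ₗ[ℂ] lp (fun _ : I => ℂ) 2))ᗮ)ᗮ = LinearMap.range (Tp : H →ₗ[ℂ] lp (fun _ : I => ℂ) 2) := by
    rw [Submodule.orthogonal_orthogonal_eq_closure,
      IsClosed.submodule_topologicalClosure_eq hclosed]
  have hrange : ∀ x : H, Pp (Tp x) ∈ LinearMap.range (Tp : H →ₗ[ℂ] lp (fun _ : I => ℂ) 2) := by
    intro x
    rw [← hOO, Submodule.mem_orthogonal]
    intro u hu
    have hu' : ∀ y : H, (inner ℂ u (Tp y) : ℂ) = 0 := by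
      intro y
      have h1 := (Submodule.mem_orthogonal _ u).mp hu (Tp y) ⟨y, rfl⟩
      rw [← inner_conj_symm, h1, map_zero]
    have hw : T ((Pp - Pm) u) = 0 := by
      apply hzero
      intro y
      rw [hkey, hPpm3]
      exact hu' y
    have hTPp : T (Pp u) = 0 := by
      apply hTPpKer
      rw [ContinuousLinearMap.sub_apply, map_sub] at hw
      exact sub_eq_zero.mp hw
    calc (inner ℂ u (Pp (Tp x)) : ℂ)
        = inner ℂ (Pp u + Pm u) (Pp (Tp x)) := by rw [hsum u]
      _ = inner ℂ (Pp u) (Pp (Tp x)) + inner ℂ (Pm u) (Pp (Tp x)) := inner_add_left _ _ _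
      _ = inner ℂ (Pp u) (Pp (Tp x)) := by rw [hdisjMP, add_zero]
      _ = inner ℂ (Pp u) (Pp (Tp x)) + inner ℂ (Pp u) (Pm (Tp x)) := by rw [hdisjPM, add_zero]
      _ = inner ℂ (Pp u) (Pp (Tp x) + Pm (Tp x)) := (inner_add_right _ _ _).symm
      _ = inner ℂ (Pp u) (Tp x) := by rw [hsum (Tp x)]
      _ = inner ℂ ((Pp - Pm) (Pp u)) (Tp x) := by rw [hPpm1]
      _ = kre J (T (Pp u)) x := (hkey _ _).symm
      _ = 0 := by rw [hTPp]; simp [kre]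
  -- the sum is everything
  have hsup : Submodule.map (R : H →ₗ[ℂ] H) (JorthCompanion J (LinearMap.range (T.comp Pm : lp (fun _ : I => ℂ) 2 →ₗ[ℂ] H))) ⊔
      Submodule.map (R : H →ₗ[ℂ] H) (JorthCompanion J (LinearMap.range (T.comp Pp : lp (fun _ : I => ℂ) 2 →ₗ[ℂ] H))) = ⊤ := by
    rw [eq_top_iff]
    rintro z -
    obtain ⟨u', hu'⟩ := hrange (Rinv z)
    have ha : R u' ∈ Submodule.map (R : H →ₗ[ℂ] H) (JorthCompanion J (LinearMap.range (T.comp Pm : lp (fun _ : I => ℂ) 2 →ₗ[ℂ] H))) :=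
      Submodule.mem_map.mpr ⟨u', (memMm u').mpr (by rw [show Tp u' = Pp (Tp (Rinv z)) from hu', hPmPp]), rfl⟩
    have hb : R (Rinv z - u') ∈
        Submodule.map (R : H →ₗ[ℂ] H) (JorthCompanion J (LinearMap.range (T.comp Pp : lp (fun _ : I => ℂ) 2 →ₗ[ℂ] H))) :=
      Submodule.mem_map.mpr ⟨Rinv z - u',
        (memMp _).mpr (by rw [map_sub, map_sub, show Tp u' = Pp (Tp (Rinv z)) from hu', hPp2, sub_self]), rfl⟩
    have hz : z = R u' + R (Rinv z - u') := by
      rw [← map_add]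
      have h1 : u' + (Rinv z - u') = Rinv z := by abel
      rw [h1, hRRinv]
    rw [hz]
    exact Submodule.add_mem_sup ha hb
  -- the intersection is trivial
  have hinf : Submodule.map (R : H →ₗ[ℂ] H) (JorthCompanion J (LinearMap.range (T.comp Pm : lp (fun _ : I => ℂ) 2 →ₗ[ℂ] H))) ⊓
      Submodule.map (R : H →ₗ[ℂ] H) (JorthCompanion J (LinearMap.range (T.comp Pp : lp (fun _ : I => ℂ) 2 →ₗ[ℂ] H))) = ⊥ := by
    rw [eq_bot_iff]
    rintro z ⟨hz1, hz2⟩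
    obtain ⟨α, hα, hP⟩ := hLpPos
    obtain ⟨β, hβ, hN⟩ := hLmNeg
    have h1 := hP z hz1
    have h2 := hN z hz2
    have h3 : ‖z‖ ^ 2 = 0 := by nlinarith [sq_nonneg ‖z‖]
    have h4 : z = 0 := norm_eq_zero.mp (sq_eq_zero_iff.mp h3)
    simpa [h4] using Submodule.zero_mem (⊥ : Submodule ℂ H)
  -- maximality
  have hmaxp : MaxUnifJPos J
      (Submodule.map (R : H →ₗ[ℂ] H) (JorthCompanion J (LinearMap.range (T.comp Pm : lp (fun _ : I => ℂ) 2 →ₗ[ℂ] H)))) := by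
    refine ⟨hLpPos, ?_⟩
    intro S' hS' hle
    refine le_antisymm ?_ hle
    intro z hz
    have hz' : z ∈ Submodule.map (R : H →ₗ[ℂ] H) (JorthCompanion J (LinearMap.range (T.comp Pm : lp (fun _ : I => ℂ) 2 →ₗ[ℂ] H))) ⊔
        Submodule.map (R : H →ₗ[ℂ] H) (JorthCompanion J (LinearMap.range (T.comp Pp : lp (fun _ : I => ℂ) 2 →ₗ[ℂ] H))) := by
      rw [hsup]; exact Submodule.mem_top
    obtain ⟨a, ha, b, hb, hab⟩ := Submodule.mem_sup.mp hz'
    have hbS : b ∈ S' := by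
      have h1 : z - a ∈ S' := Submodule.sub_mem S' hz (hle ha)
      have h2 : z - a = b := by rw [← hab]; abel
      rwa [h2] at h1
    obtain ⟨α, hα, hP⟩ := hS'
    obtain ⟨β, hβ, hN⟩ := hLmNeg
    have h1 := hP b hbS
    have h2 := hN b hb
    have h3 : ‖b‖ ^ 2 = 0 := by nlinarith [sq_nonneg ‖b‖]
    have h4 : b = 0 := norm_eq_zero.mp (sq_eq_zero_iff.mp h3)
    rw [← hab, h4, add_zero]
    exact ha
  have hmaxm : MaxUnifJNeg J
      (Submodule.map (R : H →ₗ[ℂ] H) (JorthCompanion J (LinearMap.range (T.comp Pp : lp (fun _ : I => ℂ) 2 →ₗ[ℂ] H)))) := by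
    refine ⟨hLmNeg, ?_⟩
    intro S' hS' hle
    refine le_antisymm ?_ hle
    intro z hz
    have hz' : z ∈ Submodule.map (R : H →ₗ[ℂ] H) (JorthCompanion J (LinearMap.range (T.comp Pm : lp (fun _ : I => ℂ) 2 →ₗ[ℂ] H))) ⊔
        Submodule.map (R : H →ₗ[ℂ] H) (JorthCompanion J (LinearMap.range (T.comp Pp : lp (fun _ : I => ℂ) 2 →ₗ[ℂ] H))) := by
      rw [hsup]; exact Submodule.mem_top
    obtain ⟨a, ha, b, hb, hab⟩ := Submodule.mem_sup.mp hz'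
    have haS : a ∈ S' := by
      have h1 : z - b ∈ S' := Submodule.sub_mem S' hz (hle hb)
      have h2 : z - b = a := by rw [← hab]; abel
      rwa [h2] at h1
    obtain ⟨β, hβ, hN⟩ := hS'
    obtain ⟨α, hα, hP⟩ := hLpPos
    have h1 := hP a ha
    have h2 := hN a haS
    have h3 : ‖a‖ ^ 2 = 0 := by nlinarith [sq_nonneg ‖a‖]
    have h4 : a = 0 := norm_eq_zero.mp (sq_eq_zero_iff.mp h3)
    rw [← hab, h4, zero_add]
    exact hb
  exact ⟨hmaxp, hmaxm, horth, hinf, hsup⟩
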